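/- Let η_n > 0 satisfy η_n → 0 and n^{1/2}η_n → ∞, fix 0 < δ < 1, and suppose a_n ≥ η_n/2 satisfies Φ(n^{1/2}a_n) - Φ(n^{1/2}(η_n - a_n)) = δ for all n. Then n^{1/2}a_n → ∞ and n^{1/2}(η_n - a_n) → Φ^{-1}(1-δ), i.e., a_n = η_n - n^{-1/2}Φ^{-1}(1-δ) + o(n^{-1/2}). -/

import Mathlib

open MeasureTheory ProbabilityTheory Filter

/-- Standard normal cumulative distribution function. -/
noncomputable def Phi (x : ℝ) : ℝ := (gaussianReal 0 1 (Set.Iic x)).toReal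

lemma Phi_strictMono : StrictMono Phi := by
  intro x y hxy
  have hfin : ∀ s : Set ℝ, gaussianReal 0 1 s ≠ ⊤ :=
    fun s => (measure_lt_top _ s).ne
  have hsplit : gaussianReal 0 1 (Set.Iic y)
      = gaussianReal 0 1 (Set.Iic x) + gaussianReal 0 1 (Set.Ioc x y) := by
    rw [← measure_union (by exact Set.Iic_disjoint_Ioc le_rfl) measurableSet_Ioc,
      Set.Iic_union_Ioc_eq_Iic hxy.le]
  have hpos : 0 < gaussianReal 0 1 (Set.Ioc x y) := by
    rcases eq_or_ne (gaussianReal 0 1 (Set.Ioc x y)) 0 with h | h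
    · exfalso
      have := (gaussianReal_absolutelyContinuous' 0 one_ne_zero) h
      rw [Real.volume_Ioc] at this
      simp only [ENNReal.ofReal_eq_zero] at this
      linarith [sub_pos.2 hxy]
    · exact h.bot_lt
  unfold Phi
  rw [hsplit, ENNReal.toReal_add (hfin _) (hfin _)]
  have : 0 < (gaussianReal 0 1 (Set.Ioc x y)).toReal :=
    ENNReal.toReal_pos hpos.ne' (hfin _)
  linarith

lemma Phi_tendsto_one : Tendsto Phi atTop (nhds 1) := by
  have h := tendsto_measure_Iic_atTop (gaussianReal 0 1)
  have huniv : gaussianReal 0 1 Set.univ = 1 := measure_univ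
  rw [huniv] at h
  have := (ENNReal.tendsto_toReal (by norm_num : (1 : ENNReal) ≠ ⊤)).comp h
  exact this

/-- If `η_n → 0`, `√n η_n → ∞`, `a_n ≥ η_n/2` and
`Φ(√n a_n) - Φ(√n (η_n - a_n)) = δ` with `0 < δ < 1`, then `√n a_n → ∞` and
`√n (η_n - a_n) → Φ⁻¹(1-δ)`, i.e. `a_n = η_n - Φ⁻¹(1-δ)/√n + o(1/√n)`. -/
theorem stmt5 (η a : ℕ → ℝ) (δ c : ℝ) (hδ0 : 0 < δ) (hδ1 : δ < 1)
    (hηpos : ∀ n, 0 < η n) (hη0 : Tendsto η atTop (nhds 0))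
    (hηinf : Tendsto (fun n : ℕ => Real.sqrt n * η n) atTop atTop)
    (hhalf : ∀ n, η n / 2 ≤ a n)
    (heq : ∀ n : ℕ, 1 ≤ n → Phi (Real.sqrt n * a n) - Phi (Real.sqrt n * (η n - a n)) = δ)
    (hc : Phi c = 1 - δ) :
    Tendsto (fun n : ℕ => Real.sqrt n * a n) atTop atTop ∧
      Tendsto (fun n : ℕ => Real.sqrt n * (η n - a n)) atTop (nhds c) := by
  have hs : Tendsto (fun n : ℕ => Real.sqrt n * a n) atTop atTop := by
    refine tendsto_atTop_mono (fun n => ?_) (hηinf.atTop_div_const two_pos)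
    have h2 : η n / 2 ≤ a n := hhalf n
    have h0 : (0 : ℝ) ≤ Real.sqrt n := Real.sqrt_nonneg n
    calc Real.sqrt n * η n / 2 = Real.sqrt n * (η n / 2) := by ring
    _ ≤ Real.sqrt n * a n := by exact mul_le_mul_of_nonneg_left h2 h0
  refine ⟨hs, ?_⟩
  have hPhis : Tendsto (fun n : ℕ => Phi (Real.sqrt n * a n)) atTop (nhds 1) :=
    Phi_tendsto_one.comp hs
  have hPhit : Tendsto (fun n : ℕ => Phi (Real.sqrt n * (η n - a n))) atTop (nhds (1 - δ)) := by
    have hev : (fun n : ℕ => Phi (Real.sqrt n * a n) - δ)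
        =ᶠ[atTop] fun n : ℕ => Phi (Real.sqrt n * (η n - a n)) := by
      filter_upwards [eventually_ge_atTop 1] with n hn
      have := heq n hn
      linarith
    exact Tendsto.congr' hev (hPhis.sub_const δ)
  rw [← hc] at hPhit
  refine tendsto_order.2 ⟨fun b hb => ?_, fun b hb => ?_⟩
  · have hlt : Phi b < Phi c := Phi_strictMono hb
    filter_upwards [hPhit.eventually (eventually_gt_nhds hlt)] with n hn
    by_contra h
    exact absurd (Phi_strictMono.monotone (not_lt.1 h)) (not_le.2 hn)
  · have hlt : Phi c < Phi b := Phi_strictMono hb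
    filter_upwards [hPhit.eventually (eventually_lt_nhds hlt)] with n hn
    by_contra h
    exact absurd (Phi_strictMono.monotone (not_lt.1 h)) (not_le.2 hn)
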